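/- Let k, ℓ ≥ 2 and n = kℓ. Regard the Segre determinant Seg_{k,ℓ} as a polynomial in the entries b(j,m) of B whose coefficients are polynomials over ℂ in the entries a(i,m) of A; let S be the set of all these coefficient polynomials (one for each monomial in the b-variables). Then for every partition of [n] into ℓ pairwise disjoint k-element subsets I₁, …, I_ℓ, the polynomial ∏_{r=1}^{ℓ} det(A_{I_r}) — where det(A_{I_r}) is the k×k minor polynomial of the generic matrix (a(i,m)) on columns I_r — lies in the ℂ-linear span of S. -/

import Mathlib

open MvPolynomial

/-- The generic Segre determinant `Seg_{k,ℓ}` as a multivariate polynomial over `ℂ` in the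
variables `b (j, m)` (the `Sum.inl` variables) and `a (i, m)` (the `Sum.inr` variables):
it is the determinant of the `n × n` matrix (`n = kℓ`) with rows indexed by
`(i, j) ∈ [k] × [ℓ]` via `(i, j) ↦ iℓ + j`, columns indexed by `m`, and entry
`a (i, m) * b (j, m)`. -/
noncomputable def segrePoly (k ℓ : ℕ) :
    MvPolynomial ((Fin ℓ × Fin (k * ℓ)) ⊕ (Fin k × Fin (k * ℓ))) ℂ :=
  Matrix.det (Matrix.of fun r m : Fin (k * ℓ) =>
    X (Sum.inr ((finProdFinEquiv.symm r).1, m)) * X (Sum.inl ((finProdFinEquiv.symm r).2, m)))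

/-- The Segre determinant viewed as a polynomial in the `b`-variables with coefficients in the
polynomial ring `ℂ[a (i, m)]`. -/
noncomputable def segrePolyInB (k ℓ : ℕ) :
    MvPolynomial (Fin ℓ × Fin (k * ℓ)) (MvPolynomial (Fin k × Fin (k * ℓ)) ℂ) :=
  sumAlgEquiv ℂ (Fin ℓ × Fin (k * ℓ)) (Fin k × Fin (k * ℓ)) (segrePoly k ℓ)

/-- The `k × k` minor of the generic `k × n` matrix of variables `a (i, m)` on the columns in
`I` (a `k`-element subset of `Fin n`), with columns taken in increasing order. -/
noncomputable def genericMinor {k n : ℕ} (I : Finset (Fin n)) (h : I.card = k) :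
    MvPolynomial (Fin k × Fin n) ℂ :=
  Matrix.det (Matrix.of fun i j : Fin k => X (i, (I.orderIsoOfFin h j : Fin n)))

lemma pow_zero_or_one' {R : Type*} [CommRing R] {x : R} (hx : x = 0 ∨ x = 1) (n : ℕ) :
    x ^ n = 0 ∨ x ^ n = 1 := by
  rcases hx with h | h
  · subst h; cases n with
    | zero => right; simp
    | succ n => left; simp
  · subst h; right; simp

lemma finsupp_prod_zero_or_one {σ R : Type*} [CommRing R] (g : σ → R)
    (hg : ∀ v, g v = 0 ∨ g v = 1) (e : σ →₀ ℕ) :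
    (e.prod fun v k => g v ^ k) = 0 ∨ (e.prod fun v k => g v ^ k) = 1 := by
  classical
  unfold Finsupp.prod
  induction e.support using Finset.induction with
  | empty => right; simp
  | @insert a s ha ih =>
      rw [Finset.prod_insert ha]
      rcases pow_zero_or_one' (hg a) (e a) with h1 | h1 <;>
        rcases ih with h2 | h2 <;> simp [h1, h2]

lemma aeval_zero_one_mem_span {σ R : Type*} [CommRing R] [Algebra ℂ R]
    (P : MvPolynomial σ R) (g : σ → R) (hg : ∀ v, g v = 0 ∨ g v = 1) :
    aeval g P ∈ Submodule.span ℂ (Set.range fun d : σ →₀ ℕ => coeff d P) := by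
  classical
  rw [aeval_def, eval₂_eq]
  refine Submodule.sum_mem _ fun e he => ?_
  have hprod : (∏ i ∈ e.support, g i ^ e i) = 0 ∨ (∏ i ∈ e.support, g i ^ e i) = 1 :=
    finsupp_prod_zero_or_one g hg e
  rcases hprod with h | h
  · rw [h, mul_zero]; exact Submodule.zero_mem _
  · rw [h, mul_one]
    have h2 : (algebraMap R R) (coeff e P) = coeff e P := rfl
    rw [h2]
    exact Submodule.subset_span ⟨e, rfl⟩

/-- **Bracket monomials of partitions lie in the span of the Segre coefficients.**
For `k, ℓ ≥ 2` and `n = kℓ`, let `S` be the set of coefficients of `Seg_{k,ℓ}` viewed as a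
polynomial in the `b`-variables (one coefficient, a polynomial in the `a`-variables, for each
monomial in the `b`-variables).  Then for every partition of `[n]` into `ℓ` pairwise disjoint
`k`-element subsets `I₁, …, I_ℓ`, the product of minors `∏ r, det A_{I_r}` lies in the
`ℂ`-linear span of `S`. -/
theorem prod_minors_mem_span_segre_coeffs (k ℓ : ℕ) (hk : 2 ≤ k) (hℓ : 2 ≤ ℓ)
    (I : Fin ℓ → Finset (Fin (k * ℓ))) (hcard : ∀ r, (I r).card = k)
    (hdisj : Pairwise fun r s => Disjoint (I r) (I s))
    (hcover : ∀ m : Fin (k * ℓ), ∃ r, m ∈ I r) :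
    (∏ r : Fin ℓ, genericMinor (I r) (hcard r)) ∈
      Submodule.span ℂ (Set.range fun d : (Fin ℓ × Fin (k * ℓ)) →₀ ℕ =>
        MvPolynomial.coeff d (segrePolyInB k ℓ)) := by
  classical
  set g : Fin ℓ × Fin (k * ℓ) → MvPolynomial (Fin k × Fin (k * ℓ)) ℂ :=
    fun p => if p.2 ∈ I p.1 then 1 else 0 with hgdef
  have hg01 : ∀ v, g v = 0 ∨ g v = 1 := by
    intro v; by_cases h : v.2 ∈ I v.1 <;> simp [hgdef, h]
  set h : (Fin ℓ × Fin (k * ℓ)) ⊕ (Fin k × Fin (k * ℓ)) →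
      MvPolynomial (Fin k × Fin (k * ℓ)) ℂ :=
    Sum.elim g (fun p => X p) with hhdef
  have key1 : aeval g (segrePolyInB k ℓ) = aeval h (segrePoly k ℓ) := by
    have heq : (((aeval g).restrictScalars ℂ).comp
        (sumAlgEquiv ℂ (Fin ℓ × Fin (k * ℓ)) (Fin k × Fin (k * ℓ))).toAlgHom) = aeval h := by
      apply MvPolynomial.algHom_ext
      rintro (v | v) <;>
        simp [sumAlgEquiv_X_inl, sumAlgEquiv_X_inr, hhdef]
    have := congrArg (fun F => F (segrePoly k ℓ)) heq
    simpa [segrePolyInB] using this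
  -- the column reindexing equivalence
  have hdisj' : ∀ {j j' : Fin ℓ} {m : Fin (k * ℓ)}, m ∈ I j → m ∈ I j' → j = j' := by
    intro j j' m hj hj'
    by_contra hne
    exact Finset.disjoint_left.mp (hdisj hne) hj hj'
  set fmap : Fin k × Fin ℓ → Fin (k * ℓ) :=
    fun p => ((I p.2).orderIsoOfFin (hcard p.2) p.1 : Fin (k * ℓ)) with hfdef
  have hfmem : ∀ p, fmap p ∈ I p.2 := fun p => ((I p.2).orderIsoOfFin (hcard p.2) p.1).2
  have hinj : Function.Injective fmap := by
    rintro ⟨i, j⟩ ⟨i', j'⟩ hpq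
    have hj : j = j' := hdisj' (hfmem (i, j)) (hpq ▸ hfmem (i', j'))
    subst hj
    have h3 : (I j).orderIsoOfFin (hcard j) i = (I j).orderIsoOfFin (hcard j) i' :=
      Subtype.ext hpq
    have h4 := ((I j).orderIsoOfFin (hcard j)).injective h3
    simp [h4]
  set f : (Fin k × Fin ℓ) ≃ Fin (k * ℓ) :=
    Equiv.ofBijective fmap
      ((Fintype.bijective_iff_injective_and_card fmap).mpr ⟨hinj, by simp⟩) with hfe
  -- the mapped matrix
  set M₀ : Matrix (Fin (k * ℓ)) (Fin (k * ℓ))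
      (MvPolynomial ((Fin ℓ × Fin (k * ℓ)) ⊕ (Fin k × Fin (k * ℓ))) ℂ) :=
    Matrix.of fun r m : Fin (k * ℓ) =>
      X (Sum.inr ((finProdFinEquiv.symm r).1, m)) *
        X (Sum.inl ((finProdFinEquiv.symm r).2, m)) with hM₀
  have key2 : aeval h (segrePoly k ℓ) = (M₀.map (aeval h)).det := by
    rw [segrePoly]
    exact AlgHom.map_det (aeval h) M₀
  set D : Fin ℓ → Matrix (Fin k) (Fin k) (MvPolynomial (Fin k × Fin (k * ℓ)) ℂ) :=
    fun j => Matrix.of fun i i' =>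
      X (i, ((I j).orderIsoOfFin (hcard j) i' : Fin (k * ℓ))) with hD
  have hblock : (M₀.map (aeval h)).submatrix finProdFinEquiv f = Matrix.blockDiagonal D := by
    ext ⟨i, j⟩ ⟨i', j'⟩
    have hfs : f (i', j') = fmap (i', j') := rfl
    simp only [Matrix.submatrix_apply, Matrix.map_apply, hM₀, Matrix.of_apply, hfs,
      Equiv.symm_apply_apply, map_mul, aeval_X, hhdef, Sum.elim_inl, Sum.elim_inr,
      Matrix.blockDiagonal_apply, hgdef]
    by_cases hjj : j = j'
    · subst hjj
      have : fmap (i', j) ∈ I j := hfmem (i', j)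
      simp [this, hD, hfdef]
    · have hne : fmap (i', j') ∉ I j := fun hin => hjj (hdisj' hin (hfmem (i', j')))
      simp [hne, Ne.symm hjj, hjj]
  have hdet1 : (Matrix.blockDiagonal D).det = ∏ r : Fin ℓ, genericMinor (I r) (hcard r) := by
    rw [Matrix.det_blockDiagonal]
    rfl
  set π : Equiv.Perm (Fin k × Fin ℓ) := finProdFinEquiv.trans f.symm with hπ
  have hdet2 : ((M₀.map (aeval h)).submatrix finProdFinEquiv f).det
      = ((Equiv.Perm.sign π : ℤ) : MvPolynomial (Fin k × Fin (k * ℓ)) ℂ)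
          * (M₀.map (aeval h)).det := by
    have e1 : (M₀.map (aeval h)).submatrix finProdFinEquiv f
        = ((M₀.map (aeval h)).submatrix f f).submatrix π id := by
      ext x y
      simp [Matrix.submatrix_apply, hπ]
    rw [e1, Matrix.det_permute, Matrix.det_submatrix_equiv_self]
  have hfinal : (∏ r : Fin ℓ, genericMinor (I r) (hcard r))
      = (((Equiv.Perm.sign π : ℤ) : ℂ)) • aeval g (segrePolyInB k ℓ) := by
    have hsmul : (((Equiv.Perm.sign π : ℤ) : ℂ)) • aeval g (segrePolyInB k ℓ)
        = ((Equiv.Perm.sign π : ℤ) : MvPolynomial (Fin k × Fin (k * ℓ)) ℂ)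
            * aeval g (segrePolyInB k ℓ) := by
      rw [Algebra.smul_def, map_intCast]
    rw [hsmul, key1, key2, ← hdet2, hblock, hdet1]
  rw [hfinal]
  exact Submodule.smul_mem _ _ (aeval_zero_one_mem_span _ g hg01)
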